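/- The group SL₃(𝔽₂) is generated by the two matrices a₁ = [[0,1,1],[0,1,0],[1,0,0]] and a₂ = [[1,0,0],[0,0,1],[0,1,1]]; that is, the subgroup closure of {a₁, a₂} in SL₃(𝔽₂) is the whole group. -/
import Mathlib


/-- `SL₃(𝔽₂)`, the special linear group of 3×3 matrices over the field with two elements. -/
abbrev SL3F2 := Matrix.SpecialLinearGroup (Fin 3) (ZMod 2)

/-- The matrix `a₁ = [[0,1,1],[0,1,0],[1,0,0]]` as an element of `SL₃(𝔽₂)`. -/
def sl3a1 : SL3F2 := ⟨!![0, 1, 1; 0, 1, 0; 1, 0, 0], by decide⟩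

/-- The matrix `a₂ = [[1,0,0],[0,0,1],[0,1,1]]` as an element of `SL₃(𝔽₂)`. -/
def sl3a2 : SL3F2 := ⟨!![1, 0, 0; 0, 0, 1; 0, 1, 1], by decide⟩

private lemma mem_of_eq_val {H : Subgroup SL3F2} (M : Matrix (Fin 3) (Fin 3) (ZMod 2))
    (h : M.det = 1) (g : SL3F2) (hg : g ∈ H) (hv : (g : Matrix (Fin 3) (Fin 3) (ZMod 2)) = M) :
    (⟨M, h⟩ : SL3F2) ∈ H := by
  have : g = ⟨M, h⟩ := Subtype.ext hv
  exact this ▸ hg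

private lemma zmod2_cases : ∀ a : ZMod 2, a = 0 ∨ a = 1 := by decide

/-- **Generators of `SL₃(𝔽₂)`.** The group `SL₃(𝔽₂)` is generated by the two matrices
`a₁ = [[0,1,1],[0,1,0],[1,0,0]]` and `a₂ = [[1,0,0],[0,0,1],[0,1,1]]`. -/
theorem sl3_generated : Subgroup.closure ({sl3a1, sl3a2} : Set SL3F2) = ⊤ := by
  set H := Subgroup.closure ({sl3a1, sl3a2} : Set SL3F2) with hH
  have h1 : sl3a1 ∈ H := Subgroup.subset_closure (by simp)
  have h2 : sl3a2 ∈ H := Subgroup.subset_closure (by simp)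
  rw [eq_top_iff]
  rintro ⟨M, hM⟩ -
  revert hM
  have key : ∀ hM : M.det = 1, (⟨M, hM⟩ : SL3F2) ∈ H := by
    apply Matrix.diagonal_transvection_induction
      (fun N => ∀ hN : N.det = 1, (⟨N, hN⟩ : SL3F2) ∈ H) M
    · intro D hD hdet
      have hDi : ∀ i, D i = 1 := by
        intro i
        have hne : D i ≠ 0 := by
          intro h0
          rw [Matrix.det_diagonal] at hdet
          have : ∏ j, D j = 0 := Finset.prod_eq_zero (Finset.mem_univ i) h0
          rw [this] at hdet
          exact zero_ne_one hdet
        rcases zmod2_cases (D i) with h | h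
        · exact absurd h hne
        · exact h
      have : Matrix.diagonal D = 1 := by
        rw [show D = fun _ => 1 from funext hDi, Matrix.diagonal_one]
      exact mem_of_eq_val _ _ 1 (Subgroup.one_mem H) (by simp [this])
    · rintro ⟨i, j, hij, c⟩ hdet
      simp only [Matrix.TransvectionStruct.toMatrix_mk]
      rcases zmod2_cases c with rfl | rfl
      · exact mem_of_eq_val _ _ 1 (Subgroup.one_mem H)
          (by simp [Matrix.transvection])
      · fin_cases i <;> fin_cases j <;> first
        | exact absurd rfl hij
        | exact mem_of_eq_val _ _ (sl3a2*sl3a1*sl3a1*sl3a2*sl3a2*sl3a1*sl3a1*sl3a2)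
            (by exact mul_mem (mul_mem (mul_mem (mul_mem (mul_mem (mul_mem (mul_mem h2 h1) h1) h2) h2) h1) h1) h2)
            (by decide)
        | exact mem_of_eq_val _ _ (sl3a2*sl3a1*sl3a1*sl3a2*sl3a1*sl3a1)
            (by exact mul_mem (mul_mem (mul_mem (mul_mem (mul_mem h2 h1) h1) h2) h1) h1)
            (by decide)
        | exact mem_of_eq_val _ _ (sl3a2*sl3a1*sl3a2*sl3a1*sl3a1*sl3a1*sl3a2*sl3a1)
            (by exact mul_mem (mul_mem (mul_mem (mul_mem (mul_mem (mul_mem (mul_mem h2 h1) h2) h1) h1) h1) h2) h1)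
            (by decide)
        | exact mem_of_eq_val _ _ (sl3a1*sl3a1*sl3a2*sl3a1*sl3a1*sl3a2*sl3a2*sl3a1*sl3a1)
            (by exact mul_mem (mul_mem (mul_mem (mul_mem (mul_mem (mul_mem (mul_mem (mul_mem h1 h1) h2) h1) h1) h2) h2) h1) h1)
            (by decide)
        | exact mem_of_eq_val _ _ (sl3a1*sl3a2*sl3a2*sl3a1*sl3a1*sl3a2*sl3a2*sl3a1)
            (by exact mul_mem (mul_mem (mul_mem (mul_mem (mul_mem (mul_mem (mul_mem h1 h2) h2) h1) h1) h2) h2) h1)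
            (by decide)
        | exact mem_of_eq_val _ _ (sl3a1*sl3a1*sl3a2*sl3a1*sl3a1*sl3a2*sl3a2*sl3a1*sl3a1*sl3a2)
            (by exact mul_mem (mul_mem (mul_mem (mul_mem (mul_mem (mul_mem (mul_mem (mul_mem (mul_mem h1 h1) h2) h1) h1) h2) h2) h1) h1) h2)
            (by decide)
    · intro A B PA PB hdet
      have hA : A.det = 1 := by
        rw [Matrix.det_mul] at hdet
        rcases zmod2_cases A.det with h0 | h1'
        · rw [h0, zero_mul] at hdet; exact absurd hdet zero_ne_one
        · exact h1'
      have hB : B.det = 1 := by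
        rw [Matrix.det_mul, hA, one_mul] at hdet; exact hdet
      exact mem_of_eq_val _ _ (⟨A, hA⟩ * ⟨B, hB⟩) (mul_mem (PA hA) (PB hB)) rfl
  exact key
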